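/- arXiv:1611.08175 — 2 statements merged into one kernel-verified Lean document; each statement's English description precedes it below -/
import Mathlib

section
/- Let 𝒳 and 𝒴 have |𝒳| ≥ 2 and |𝒴| ≥ 2, let Q be a positive joint distribution on 𝒳 × 𝒴, let n ≥ 1, set ν_n = 4(|𝒳|−1)(|𝒴|−1)/n and Δ_n = ν_n·log(|𝒳||𝒴|/ν_n) + ν_n·max_{x,y} log(1/Q(x,y)), and assume ν_n ≤ 1/2. Then for every joint type P̄ ∈ 𝒫_n(𝒳 × 𝒴): E_n(P̄‖Q) ≤ E(P̄‖Q) + Δ_n, where E_n(P̄‖Q) = min{ D(P̃‖Q) : P̃ ∈ 𝒫_n(𝒳 × 𝒴), P̃_X = P̄_X, P̃_Y = P̄_Y }. -/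
open scoped Classical BigOperators

noncomputable section

variable {X Y : Type*} [Fintype X] [Fintype Y]

/-- `P` is a joint distribution on `X × Y`. -/
def IsDist (P : X × Y → ℝ) : Prop :=
  (∀ z, 0 ≤ P z) ∧ ∑ z : X × Y, P z = 1

/-- `P` is a positive joint distribution on `X × Y`. -/
def IsPos (P : X × Y → ℝ) : Prop :=
  (∀ z, 0 < P z) ∧ ∑ z : X × Y, P z = 1

/-- The first marginal of a joint distribution. -/
def margX (P : X × Y → ℝ) (x : X) : ℝ := ∑ y : Y, P (x, y)

/-- The second marginal of a joint distribution. -/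
def margY (P : X × Y → ℝ) (y : Y) : ℝ := ∑ x : X, P (x, y)

/-- Relative entropy `D(P‖Q)` (natural log; `Real.log 0 = 0` realizes `0·log 0 = 0`). -/
def relEnt (P Q : X × Y → ℝ) : ℝ := ∑ z : X × Y, P z * Real.log (P z / Q z)

/-- Projected relative entropy `E(P‖Q)`. -/
def projE (P Q : X × Y → ℝ) : ℝ :=
  sInf { d : ℝ | ∃ P' : X × Y → ℝ,
    IsDist P' ∧ margX P' = margX P ∧ margY P' = margY P ∧ d = relEnt P' Q }

/-- `R ∈ ℰ^{xy}(S)` : `R` has the same correlation coordinates as `S`. -/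
def SameCorr (R S : X × Y → ℝ) : Prop :=
  ∃ a1 : X → ℝ, ∃ a2 : Y → ℝ,
    ∀ x : X, ∀ y : Y, Real.log (R (x, y) / S (x, y)) = a1 x + a2 y

/-- The type (empirical distribution) of a sequence. -/
def empDist {n : ℕ} (x : Fin n → X) (a : X) : ℝ :=
  ((Finset.univ.filter fun i => x i = a).card : ℝ) / n

/-- The joint type of a pair of sequences. -/
def empJoint {n : ℕ} (x : Fin n → X) (y : Fin n → Y) (z : X × Y) : ℝ :=
  ((Finset.univ.filter fun i => x i = z.1 ∧ y i = z.2).card : ℝ) / n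

/-- Probability of a set under the `n`-fold i.i.d. product of `P`. -/
def prodProb (P : X × Y → ℝ) (n : ℕ) (A : Set ((Fin n → X) × (Fin n → Y))) : ℝ :=
  ∑ z : (Fin n → X) × (Fin n → Y),
    if z ∈ A then ∏ i : Fin n, P (z.1 i, z.2 i) else 0

/-- `P` is a joint type with denominator `n` (an element of `𝒫ₙ(𝒳 × 𝒴)`). -/
def IsTypeN (n : ℕ) (P : X × Y → ℝ) : Prop :=
  IsDist P ∧ ∀ z : X × Y, ∃ k : ℕ, P z = (k : ℝ) / n

/-- `Eₙ(P̄‖Q)` : projected relative entropy restricted to joint types. -/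
def En (n : ℕ) (Pbar Q : X × Y → ℝ) : ℝ :=
  sInf { d : ℝ | ∃ Pt : X × Y → ℝ,
    IsTypeN n Pt ∧ margX Pt = margX Pbar ∧ margY Pt = margY Pbar ∧ d = relEnt Pt Q }

/-- Standard normal cumulative distribution function `Φ`. -/
def stdNormalCDF (t : ℝ) : ℝ :=
  ∫ u in Set.Iic t, (Real.sqrt (2 * Real.pi))⁻¹ * Real.exp (-(u ^ 2) / 2)

/-- Inverse of the standard normal CDF, `Φ⁻¹`. -/
def stdNormalCDFInv (e : ℝ) : ℝ := Function.invFun stdNormalCDF e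


def IsIntR (r : ℝ) : Prop := ∃ k : ℤ, r = k

lemma IsIntR.sub {a b : ℝ} (ha : IsIntR a) (hb : IsIntR b) : IsIntR (a - b) := by
  obtain ⟨k, rfl⟩ := ha; obtain ⟨l, rfl⟩ := hb; exact ⟨k - l, by push_cast; ring⟩

lemma isIntR_sum {ι : Type*} (s : Finset ι) (f : ι → ℝ) (h : ∀ i ∈ s, IsIntR (f i)) :
    IsIntR (∑ i ∈ s, f i) := by
  classical
  induction s using Finset.induction_on with
  | empty => exact ⟨0, by simp⟩
  | @insert a s' hx ih =>
    rw [Finset.sum_insert hx]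
    obtain ⟨k, hk⟩ := h a (Finset.mem_insert_self a s')
    obtain ⟨l, hl⟩ := ih fun i hi => h i (Finset.mem_insert_of_mem hi)
    exact ⟨k + l, by rw [hk, hl]; push_cast; ring⟩

lemma exists_col_mate {A : X × Y → ℝ} (hc : ∀ y, IsIntR (∑ x, A (x, y)))
    {x : X} {y : Y} (h : ¬ IsIntR (A (x, y))) :
    ∃ x' : X, x' ≠ x ∧ ¬ IsIntR (A (x', y)) := by
  by_contra h'
  push_neg at h'
  apply h
  have hxy : A (x, y) = (∑ x', A (x', y)) - ∑ x' ∈ Finset.univ.erase x, A (x', y) := by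
    rw [Finset.sum_erase_eq_sub (Finset.mem_univ x)]; ring
  rw [hxy]
  exact (hc y).sub (isIntR_sum _ _ fun i hi => h' i (Finset.ne_of_mem_erase hi))

lemma exists_row_mate {A : X × Y → ℝ} (hr : ∀ x, IsIntR (∑ y, A (x, y)))
    {x : X} {y : Y} (h : ¬ IsIntR (A (x, y))) :
    ∃ y' : Y, y' ≠ y ∧ ¬ IsIntR (A (x, y')) := by
  by_contra h'
  push_neg at h'
  apply h
  have hxy : A (x, y) = (∑ y', A (x, y')) - ∑ y' ∈ Finset.univ.erase y, A (x, y') := by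
    rw [Finset.sum_erase_eq_sub (Finset.mem_univ y)]; ring
  rw [hxy]
  exact (hr x).sub (isIntR_sum _ _ fun i hi => h' i (Finset.ne_of_mem_erase hi))

lemma telescope_Ico (f : ℕ → ℤ) {a b : ℕ} (h : a ≤ b) :
    ∑ k ∈ Finset.Ico a b, (f k - f (k + 1)) = f a - f b := by
  induction b, h using Nat.le_induction with
  | base => simp
  | succ b hb ih => rw [Finset.sum_Ico_succ_top hb, ih]; ring

set_option linter.unusedSectionVars false
set_option maxHeartbeats 1000000

lemma round_aux : ∀ (m : ℕ) (A : X × Y → ℝ),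
    (∀ x, IsIntR (∑ y, A (x, y))) → (∀ y, IsIntR (∑ x, A (x, y))) →
    (Finset.univ.filter (fun z : X × Y => ¬ IsIntR (A z))).card ≤ m →
    ∃ B : X × Y → ℤ,
      (∀ x, ∑ y, ((B (x, y) : ℝ)) = ∑ y, A (x, y)) ∧
      (∀ y, ∑ x, ((B (x, y) : ℝ)) = ∑ x, A (x, y)) ∧
      (∀ z, ((⌊A z⌋ : ℝ) ≤ (B z : ℝ) ∧ (B z : ℝ) ≤ (⌈A z⌉ : ℝ))) := by
  intro m
  induction m with
  | zero =>
    intro A hr hc hcard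
    have hall : ∀ z : X × Y, IsIntR (A z) := by
      intro z
      by_contra hz
      have hmem : z ∈ Finset.univ.filter (fun z : X × Y => ¬ IsIntR (A z)) := by simp [hz]
      have := Finset.card_pos.mpr ⟨z, hmem⟩
      omega
    have heq : ∀ z : X × Y, ((⌊A z⌋ : ℝ)) = A z := by
      intro z; obtain ⟨k, hk⟩ := hall z; rw [hk]; simp
    refine ⟨fun z => ⌊A z⌋, ?_, ?_, ?_⟩
    · intro x; exact Finset.sum_congr rfl fun y _ => heq (x, y)
    · intro y; exact Finset.sum_congr rfl fun x _ => heq (x, y)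
    · intro z; exact ⟨le_refl _, by rw [heq z]; exact Int.le_ceil _⟩
  | succ m ih =>
    intro A hr hc hcard
    by_cases hcard' : (Finset.univ.filter (fun z : X × Y => ¬ IsIntR (A z))).card ≤ m
    · exact ih A hr hc hcard'
    -- F is nonempty
    set F := Finset.univ.filter (fun z : X × Y => ¬ IsIntR (A z)) with hF
    obtain ⟨z₀, hz₀⟩ : F.Nonempty := Finset.card_pos.mp (by omega)
    have hz₀' : ¬ IsIntR (A z₀) := (Finset.mem_filter.mp hz₀).2
    -- step functions
    have stepx : ∀ w : {z : X × Y // ¬ IsIntR (A z)},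
        ∃ w' : {z : X × Y // ¬ IsIntR (A z)}, w'.1.2 = w.1.2 ∧ w'.1.1 ≠ w.1.1 := by
      rintro ⟨⟨x, y⟩, hw⟩
      obtain ⟨x', hne, hfr⟩ := exists_col_mate hc hw
      exact ⟨⟨(x', y), hfr⟩, rfl, hne⟩
    have stepy : ∀ w : {z : X × Y // ¬ IsIntR (A z)},
        ∃ w' : {z : X × Y // ¬ IsIntR (A z)}, w'.1.1 = w.1.1 ∧ w'.1.2 ≠ w.1.2 := by
      rintro ⟨⟨x, y⟩, hw⟩
      obtain ⟨y', hne, hfr⟩ := exists_row_mate hr hw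
      exact ⟨⟨(x, y'), hfr⟩, rfl, hne⟩
    choose sx hsx2 hsx1 using stepx
    choose sy hsy1 hsy2 using stepy
    set g : ℕ → {z : X × Y // ¬ IsIntR (A z)} :=
      fun k => Nat.rec ⟨z₀, hz₀'⟩ (fun _ w => sy (sx w)) k with hgdef
    have hg : ∀ k, g (k + 1) = sy (sx (g k)) := fun k => rfl
    set xs : ℕ → X := fun k => (g k).1.1 with hxsdef
    set ys : ℕ → Y := fun k => (g k).1.2 with hysdef
    have hxs1 : ∀ k, xs (k + 1) = (sx (g k)).1.1 := by
      intro k; rw [hxsdef]; simp only [hg k]; exact hsy1 (sx (g k))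
    have hmid : ∀ k, ¬ IsIntR (A (xs (k + 1), ys k)) := by
      intro k
      have h2 : (sx (g k)).1.2 = ys k := hsx2 (g k)
      have h3 : (sx (g k)).1 = (xs (k + 1), ys k) := by
        rw [hxs1 k]; exact Prod.ext rfl h2
      rw [← h3]; exact (sx (g k)).2
    have hxne : ∀ k, xs (k + 1) ≠ xs k := by
      intro k; rw [hxs1 k]; exact hsx1 (g k)
    have hyne : ∀ k, ys (k + 1) ≠ ys k := by
      intro k
      have h1 : ys (k + 1) = (sy (sx (g k))).1.2 := rfl
      rw [h1]
      have := hsy2 (sx (g k))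
      rw [hsx2 (g k)] at this
      exact this
    have hgF : ∀ k, ¬ IsIntR (A (xs k, ys k)) := by
      intro k
      have : (xs k, ys k) = (g k).1 := rfl
      rw [this]; exact (g k).2
    -- pigeonhole
    have hexists : ∃ j, ∃ i, i < j ∧ xs i = xs j := by
      obtain ⟨a, b, hab, heq⟩ := Fintype.exists_ne_map_eq_of_card_lt
        (fun k : Fin (Fintype.card X + 1) => xs k) (by simp)
      rcases lt_or_gt_of_ne (fun h : (a : ℕ) = (b : ℕ) => hab (Fin.ext h)) with h | h
      · exact ⟨b, a, h, heq⟩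
      · exact ⟨a, b, h, heq.symm⟩
    set J := Nat.find hexists with hJdef
    obtain ⟨I, hIJ, hxIJ⟩ := Nat.find_spec hexists
    rw [← hJdef] at hIJ hxIJ
    have hinj : ∀ i j, i < j → j < J → xs i ≠ xs j := by
      intro i j hij hjJ h
      exact Nat.find_min hexists hjJ ⟨i, hij, h⟩
    have huniq : ∀ i j, i < J → j < J → xs i = xs j → i = j := by
      intro i j hi hj h
      rcases Nat.lt_trichotomy i j with hlt | heq | hgt
      · exact absurd h (hinj i j hlt hj)
      · exact heq
      · exact absurd h.symm (hinj j i hgt hi)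
    have hI1J : I + 1 < J := by
      rcases Nat.lt_or_ge (I + 1) J with h | h
      · exact h
      · exfalso
        have : J = I + 1 := by omega
        exact hxne I (by rw [← this]; exact hxIJ.symm)
    -- the alternating cycle coefficient function
    set c : X × Y → ℤ := fun z => ∑ k ∈ Finset.Ico I J,
      ((if z = (xs k, ys k) then (1 : ℤ) else 0) -
        (if z = (xs (k + 1), ys k) then (1 : ℤ) else 0)) with hcdef
    have hcrow : ∀ x, ∑ y, c (x, y) = 0 := by
      intro x
      have hswap : ∑ y, c (x, y) = ∑ k ∈ Finset.Ico I J,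
          ((if x = xs k then (1 : ℤ) else 0) - (if x = xs (k + 1) then (1 : ℤ) else 0)) := by
        rw [hcdef]
        rw [Finset.sum_comm]
        refine Finset.sum_congr rfl fun k _ => ?_
        rw [Finset.sum_sub_distrib]
        congr 1
        · by_cases hx : x = xs k <;> simp [Prod.ext_iff, hx]
        · by_cases hx : x = xs (k + 1) <;> simp [Prod.ext_iff, hx]
      rw [hswap, telescope_Ico (fun k => if x = xs k then (1 : ℤ) else 0) (le_of_lt hIJ)]
      rw [hxIJ]
      ring
    have hccol : ∀ y, ∑ x, c (x, y) = 0 := by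
      intro y
      rw [hcdef]
      rw [Finset.sum_comm]
      refine Finset.sum_eq_zero fun k _ => ?_
      rw [Finset.sum_sub_distrib]
      have e1 : (∑ x : X, if (x, y) = (xs k, ys k) then (1 : ℤ) else 0)
          = (if y = ys k then (1 : ℤ) else 0) := by
        by_cases hy : y = ys k <;> simp [Prod.ext_iff, hy]
      have e2 : (∑ x : X, if (x, y) = (xs (k + 1), ys k) then (1 : ℤ) else 0)
          = (if y = ys k then (1 : ℤ) else 0) := by
        by_cases hy : y = ys k <;> simp [Prod.ext_iff, hy]
      rw [e1, e2]; ring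
    have hsupp : ∀ z, c z ≠ 0 → ¬ IsIntR (A z) := by
      intro z hcz
      by_contra hint
      apply hcz
      rw [hcdef]
      refine Finset.sum_eq_zero fun k _ => ?_
      rw [if_neg, if_neg]
      · ring
      · intro h; exact hmid k (h ▸ hint)
      · intro h; exact hgF k (h ▸ hint)
    have hc_cases : ∀ z, c z = -1 ∨ c z = 0 ∨ c z = 1 := by
      intro z
      have hsplit : c z = (∑ k ∈ Finset.Ico I J, if z = (xs k, ys k) then (1 : ℤ) else 0)
          - (∑ k ∈ Finset.Ico I J, if z = (xs (k + 1), ys k) then (1 : ℤ) else 0) := by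
        simp only [hcdef]; rw [Finset.sum_sub_distrib]
      have h1 : (∑ k ∈ Finset.Ico I J, if z = (xs k, ys k) then (1 : ℤ) else 0)
          = (((Finset.Ico I J).filter (fun k => z = (xs k, ys k))).card : ℤ) :=
        Finset.sum_boole _ _
      have h2 : (∑ k ∈ Finset.Ico I J, if z = (xs (k + 1), ys k) then (1 : ℤ) else 0)
          = (((Finset.Ico I J).filter (fun k => z = (xs (k + 1), ys k))).card : ℤ) :=
        Finset.sum_boole _ _
      have hcard1 : ((Finset.Ico I J).filter (fun k => z = (xs k, ys k))).card ≤ 1 := by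
        refine Finset.card_le_one.mpr fun a ha b hb => ?_
        obtain ⟨haI, ha'⟩ := Finset.mem_filter.mp ha
        obtain ⟨hbI, hb'⟩ := Finset.mem_filter.mp hb
        rw [Finset.mem_Ico] at haI hbI
        have : xs a = xs b := by
          have := ha'.symm.trans hb'
          exact (Prod.ext_iff.mp this).1
        exact huniq a b haI.2 hbI.2 this
      have hcard2 : ((Finset.Ico I J).filter (fun k => z = (xs (k + 1), ys k))).card ≤ 1 := by
        refine Finset.card_le_one.mpr fun a ha b hb => ?_
        obtain ⟨haI, ha'⟩ := Finset.mem_filter.mp ha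
        obtain ⟨hbI, hb'⟩ := Finset.mem_filter.mp hb
        rw [Finset.mem_Ico] at haI hbI
        have hxab : xs (a + 1) = xs (b + 1) := by
          have := ha'.symm.trans hb'
          exact (Prod.ext_iff.mp this).1
        by_cases haJ : a + 1 = J
        · by_cases hbJ : b + 1 = J
          · omega
          · exfalso
            have hbJ' : b + 1 < J := by omega
            have : xs I = xs (b + 1) := by rw [hxIJ, ← haJ]; exact hxab
            have := huniq I (b + 1) hIJ hbJ' this
            omega
        · by_cases hbJ : b + 1 = J
          · exfalso
            have haJ' : a + 1 < J := by omega
            have : xs I = xs (a + 1) := by rw [hxIJ, ← hbJ]; exact hxab.symm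
            have := huniq I (a + 1) hIJ haJ' this
            omega
          · have haJ' : a + 1 < J := by omega
            have hbJ' : b + 1 < J := by omega
            have := huniq (a + 1) (b + 1) haJ' hbJ' hxab
            omega
      rw [hsplit, h1, h2]
      have n1 : (0 : ℕ) ≤ ((Finset.Ico I J).filter (fun k => z = (xs k, ys k))).card := Nat.zero_le _
      omega
    have hcstar : c (xs (I + 1), ys (I + 1)) = 1 := by
      have hsplit : c (xs (I + 1), ys (I + 1)) =
          (∑ k ∈ Finset.Ico I J, if (xs (I + 1), ys (I + 1)) = (xs k, ys k) then (1 : ℤ) else 0)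
          - (∑ k ∈ Finset.Ico I J,
              if (xs (I + 1), ys (I + 1)) = (xs (k + 1), ys k) then (1 : ℤ) else 0) := by
        simp only [hcdef]; rw [Finset.sum_sub_distrib]
      have e1 : (∑ k ∈ Finset.Ico I J,
          if (xs (I + 1), ys (I + 1)) = (xs k, ys k) then (1 : ℤ) else 0) = 1 := by
        rw [Finset.sum_eq_single_of_mem (I + 1) (Finset.mem_Ico.mpr ⟨by omega, hI1J⟩)]
        · rw [if_pos rfl]
        · intro k hk hkne
          rw [Finset.mem_Ico] at hk
          rw [if_neg]
          intro h
          have hx : xs (I + 1) = xs k := (Prod.ext_iff.mp h).1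
          exact hkne (huniq (I + 1) k hI1J hk.2 hx).symm
      have e2 : (∑ k ∈ Finset.Ico I J,
          if (xs (I + 1), ys (I + 1)) = (xs (k + 1), ys k) then (1 : ℤ) else 0) = 0 := by
        refine Finset.sum_eq_zero fun k hk => ?_
        rw [Finset.mem_Ico] at hk
        rw [if_neg]
        intro h
        have hx : xs (I + 1) = xs (k + 1) := (Prod.ext_iff.mp h).1
        have hy : ys (I + 1) = ys k := (Prod.ext_iff.mp h).2
        by_cases hkJ : k + 1 = J
        · rw [hkJ, ← hxIJ] at hx
          exact hxne I hx
        · have hkJ' : k + 1 < J := by omega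
          have := huniq (I + 1) (k + 1) hI1J hkJ' hx
          have hkI : k = I := by omega
          rw [hkI] at hy
          exact hyne I hy
      rw [hsplit, e1, e2]
      ring
    -- the perturbation
    set s : Finset (X × Y) := Finset.univ.filter (fun z => c z ≠ 0) with hsdef
    have hsne : s.Nonempty := ⟨(xs (I + 1), ys (I + 1)), by simp [hsdef, hcstar]⟩
    set slk : X × Y → ℝ := fun z => if 0 < c z then (⌈A z⌉ : ℝ) - A z else A z - ⌊A z⌋ with hslkdef
    have hfrac_bnd : ∀ z, ¬ IsIntR (A z) → ((⌊A z⌋ : ℝ) < A z ∧ A z < (⌈A z⌉ : ℝ)) := by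
      intro z hz
      constructor
      · exact lt_of_le_of_ne (Int.floor_le _) fun h => hz ⟨⌊A z⌋, h.symm⟩
      · exact lt_of_le_of_ne (Int.le_ceil _) fun h => hz ⟨⌈A z⌉, h⟩
    have hslk_pos : ∀ z ∈ s, (0 : ℝ) < slk z := by
      intro z hz
      have hcz : c z ≠ 0 := (Finset.mem_filter.mp hz).2
      obtain ⟨h1, h2⟩ := hfrac_bnd z (hsupp z hcz)
      rw [hslkdef]
      dsimp only
      split <;> linarith
    set t : ℝ := s.inf' hsne slk with htdef
    have ht_pos : 0 < t := (Finset.lt_inf'_iff hsne).mpr hslk_pos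
    have ht_le : ∀ z ∈ s, t ≤ slk z := fun z hz => Finset.inf'_le _ hz
    set A' : X × Y → ℝ := fun z => A z + t * (c z : ℝ) with hA'def
    have hA'eq : ∀ z, IsIntR (A z) → A' z = A z := by
      intro z hz
      have hcz : c z = 0 := by
        by_contra h
        exact hsupp z h hz
      rw [hA'def]; dsimp only; rw [hcz]; push_cast; ring
    have hA'row : ∀ x, ∑ y, A' (x, y) = ∑ y, A (x, y) := by
      intro x
      rw [hA'def]
      dsimp only
      rw [Finset.sum_add_distrib, ← Finset.mul_sum]
      have : (∑ y, (c (x, y) : ℝ)) = ((∑ y, c (x, y) : ℤ) : ℝ) := by push_cast; rfl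
      rw [this, hcrow x]
      push_cast
      ring
    have hA'col : ∀ y, ∑ x, A' (x, y) = ∑ x, A (x, y) := by
      intro y
      rw [hA'def]
      dsimp only
      rw [Finset.sum_add_distrib, ← Finset.mul_sum]
      have : (∑ x, (c (x, y) : ℝ)) = ((∑ x, c (x, y) : ℤ) : ℝ) := by push_cast; rfl
      rw [this, hccol y]
      push_cast
      ring
    have hA'bounds : ∀ z, (⌊A z⌋ : ℝ) ≤ A' z ∧ A' z ≤ (⌈A z⌉ : ℝ) := by
      intro z
      rcases hc_cases z with h | h | h
      · have hzs : z ∈ s := by simp [hsdef, h]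
        have h1 := ht_le z hzs
        have h2 : slk z = A z - ⌊A z⌋ := by rw [hslkdef]; dsimp only; rw [if_neg (by omega)]
        have h3 : A' z = A z - t := by rw [hA'def]; dsimp only; rw [h]; push_cast; ring
        rw [h2] at h1
        constructor
        · rw [h3]; linarith
        · rw [h3]
          have := Int.le_ceil (A z)
          linarith
      · have h3 : A' z = A z := by rw [hA'def]; dsimp only; rw [h]; push_cast; ring
        rw [h3]
        exact ⟨Int.floor_le _, Int.le_ceil _⟩
      · have hzs : z ∈ s := by simp [hsdef, h]
        have h1 := ht_le z hzs
        have h2 : slk z = (⌈A z⌉ : ℝ) - A z := by rw [hslkdef]; dsimp only; rw [if_pos (by omega)]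
        have h3 : A' z = A z + t := by rw [hA'def]; dsimp only; rw [h]; push_cast; ring
        rw [h2] at h1
        constructor
        · rw [h3]
          have := Int.floor_le (A z)
          linarith
        · rw [h3]; linarith
    -- the minimizer becomes integral
    obtain ⟨zm, hzm_mem, hzm⟩ := Finset.exists_mem_eq_inf' hsne slk
    have hzm_c : c zm ≠ 0 := (Finset.mem_filter.mp hzm_mem).2
    have hzm_frac : ¬ IsIntR (A zm) := hsupp zm hzm_c
    have hzm_int : IsIntR (A' zm) := by
      rcases hc_cases zm with h | h | h
      · have h2 : slk zm = A zm - ⌊A zm⌋ := by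
          rw [hslkdef]; dsimp only; rw [if_neg (by omega)]
        refine ⟨⌊A zm⌋, ?_⟩
        rw [hA'def]; dsimp only
        rw [h, htdef, hzm, h2]
        push_cast; ring
      · exact absurd h hzm_c
      · have h2 : slk zm = (⌈A zm⌉ : ℝ) - A zm := by
          rw [hslkdef]; dsimp only; rw [if_pos (by omega)]
        refine ⟨⌈A zm⌉, ?_⟩
        rw [hA'def]; dsimp only
        rw [h, htdef, hzm, h2]
        push_cast; ring
    -- the new fractional set is strictly smaller
    have hsub : Finset.univ.filter (fun z : X × Y => ¬ IsIntR (A' z)) ⊆ F.erase zm := by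
      intro z hz
      have hz' : ¬ IsIntR (A' z) := (Finset.mem_filter.mp hz).2
      have hzA : ¬ IsIntR (A z) := by
        intro h
        exact hz' (by rw [hA'eq z h]; exact h)
      rw [Finset.mem_erase]
      constructor
      · intro h
        rw [h] at hz'
        exact hz' hzm_int
      · rw [hF]; simp [hzA]
    have hcard2 : (Finset.univ.filter (fun z : X × Y => ¬ IsIntR (A' z))).card ≤ m := by
      have h1 := Finset.card_le_card hsub
      have hzmF : zm ∈ F := by rw [hF]; simp [hzm_frac]
      have h2 := Finset.card_erase_of_mem hzmF
      omega
    -- apply the induction hypothesis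
    obtain ⟨B, hB1, hB2, hB3⟩ := ih A'
      (fun x => by rw [hA'row x]; exact hr x)
      (fun y => by rw [hA'col y]; exact hc y)
      hcard2
    refine ⟨B, ?_, ?_, ?_⟩
    · intro x; rw [hB1 x, hA'row x]
    · intro y; rw [hB2 y, hA'col y]
    · intro z
      obtain ⟨hb1, hb2⟩ := hB3 z
      obtain ⟨ha1, ha2⟩ := hA'bounds z
      constructor
      · calc ((⌊A z⌋ : ℝ)) ≤ ((⌊A' z⌋ : ℝ)) := by
              exact_mod_cast Int.le_floor.mpr ha1
          _ ≤ (B z : ℝ) := hb1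
      · calc (B z : ℝ) ≤ ((⌈A' z⌉ : ℝ)) := hb2
          _ ≤ ((⌈A z⌉ : ℝ)) := by exact_mod_cast Int.ceil_le.mpr ha2



lemma exists_rounding (n : ℕ) (hn : 0 < n) (P' Pbar : X × Y → ℝ)
    (hP'0 : ∀ z, 0 ≤ P' z)
    (hmx : margX P' = margX Pbar) (hmy : margY P' = margY Pbar)
    (hPbar : IsTypeN n Pbar) :
    ∃ Pt : X × Y → ℝ, IsTypeN n Pt ∧ margX Pt = margX Pbar ∧ margY Pt = margY Pbar ∧
      (∀ z, |Pt z - P' z| ≤ 1 / n) := by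
  have hnR : (0 : ℝ) < n := by exact_mod_cast hn
  set A : X × Y → ℝ := fun z => (n : ℝ) * P' z with hAdef
  have hint : ∀ z, IsIntR ((n : ℝ) * Pbar z) := by
    intro z
    obtain ⟨k, hk⟩ := hPbar.2 z
    exact ⟨(k : ℤ), by rw [hk]; push_cast; field_simp⟩
  have hrow : ∀ x, IsIntR (∑ y, A (x, y)) := by
    intro x
    have h1 : ∑ y, A (x, y) = ∑ y, (n : ℝ) * Pbar (x, y) := by
      rw [hAdef]
      dsimp only
      rw [← Finset.mul_sum, ← Finset.mul_sum]
      congr 1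
      exact congrFun hmx x
    rw [h1]
    exact isIntR_sum _ _ fun y _ => hint (x, y)
  have hcol : ∀ y, IsIntR (∑ x, A (x, y)) := by
    intro y
    have h1 : ∑ x, A (x, y) = ∑ x, (n : ℝ) * Pbar (x, y) := by
      rw [hAdef]
      dsimp only
      rw [← Finset.mul_sum, ← Finset.mul_sum]
      congr 1
      exact congrFun hmy y
    rw [h1]
    exact isIntR_sum _ _ fun x _ => hint (x, y)
  obtain ⟨B, hB1, hB2, hB3⟩ := round_aux _ A hrow hcol le_rfl
  have hB0 : ∀ z, (0 : ℝ) ≤ (B z : ℝ) := by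
    intro z
    refine le_trans ?_ (hB3 z).1
    have : (0 : ℤ) ≤ ⌊A z⌋ := Int.floor_nonneg.mpr (mul_nonneg hnR.le (hP'0 z))
    exact_mod_cast this
  have hBnear : ∀ z, |(B z : ℝ) - A z| ≤ 1 := by
    intro z
    obtain ⟨h1, h2⟩ := hB3 z
    have h3 : A z - 1 < (⌊A z⌋ : ℝ) := Int.sub_one_lt_floor (A z)
    have h4 : ((⌈A z⌉ : ℝ)) < A z + 1 := Int.ceil_lt_add_one (A z)
    rw [abs_le]
    constructor <;> linarith
  refine ⟨fun z => (B z : ℝ) / n, ⟨⟨fun z => div_nonneg (hB0 z) hnR.le, ?_⟩, ?_⟩, ?_, ?_, ?_⟩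
  · -- sums to 1
    show ∑ z : X × Y, (B z : ℝ) / n = 1
    have h1 : (∑ x, ∑ y, (B (x, y) : ℝ)) / n = ∑ z : X × Y, (B z : ℝ) / n := by
      rw [Finset.sum_div, Fintype.sum_prod_type]
      exact Finset.sum_congr rfl fun x _ => Finset.sum_div _ _ _
    rw [← h1]
    have h2 : ∑ x, ∑ y, (B (x, y) : ℝ) = ∑ x, ∑ y, A (x, y) :=
      Finset.sum_congr rfl fun x _ => hB1 x
    rw [h2]
    have h3 : ∑ x, ∑ y, A (x, y) = (n : ℝ) * ∑ z : X × Y, P' z := by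
      rw [hAdef, Fintype.sum_prod_type, Finset.mul_sum]
      exact Finset.sum_congr rfl fun x _ => by rw [Finset.mul_sum]
    rw [h3]
    have h4 : ∑ z : X × Y, P' z = 1 := by
      have h5 : ∑ z : X × Y, P' z = ∑ x, margX P' x := by
        rw [Fintype.sum_prod_type]; rfl
      have h6 : ∑ z : X × Y, Pbar z = ∑ x, margX Pbar x := by
        rw [Fintype.sum_prod_type]; rfl
      rw [h5, hmx, ← h6, hPbar.1.2]
    rw [h4]
    field_simp
  · -- is a type
    intro z
    have h1 : (0 : ℤ) ≤ B z := by exact_mod_cast hB0 z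
    refine ⟨(B z).toNat, ?_⟩
    have h2 : ((B z).toNat : ℝ) = (B z : ℝ) := by exact_mod_cast Int.toNat_of_nonneg h1
    rw [h2]
  · -- margX
    funext x
    show ∑ y, (B (x, y) : ℝ) / n = margX Pbar x
    rw [← Finset.sum_div, hB1 x]
    have h1 : ∑ y, A (x, y) = (n : ℝ) * margX P' x := by
      rw [hAdef]; exact (Finset.mul_sum _ _ _).symm
    rw [h1, hmx]
    field_simp
  · -- margY
    funext y
    show ∑ x, (B (x, y) : ℝ) / n = margY Pbar y
    rw [← Finset.sum_div, hB2 y]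
    have h1 : ∑ x, A (x, y) = (n : ℝ) * margY P' y := by
      rw [hAdef]; exact (Finset.mul_sum _ _ _).symm
    rw [h1, hmy]
    field_simp
  · -- entrywise closeness
    intro z
    have h1 : (B z : ℝ) / n - P' z = ((B z : ℝ) - A z) / n := by
      rw [hAdef]; field_simp
    rw [h1, abs_div, abs_of_pos hnR]
    exact (div_le_div_iff_of_pos_right hnR).mpr (hBnear z)


lemma gibbs_pt {a b : ℝ} (ha : 0 ≤ a) (hb : 0 < b) : a - b ≤ a * Real.log (a / b) := by
  rcases eq_or_lt_of_le ha with h | h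
  · rw [← h]; simp; linarith
  · have h1 : Real.log (b / a) ≤ b / a - 1 := Real.log_le_sub_one_of_pos (by positivity)
    have h2 : Real.log (a / b) = - Real.log (b / a) := by
      rw [← Real.log_inv]; congr 1; rw [inv_div]
    rw [h2]
    have h4 := mul_le_mul_of_nonneg_left h1 ha
    have h3 : a * (b / a - 1) = b - a := by field_simp
    nlinarith
lemma relEnt_nonneg' {P Q : X × Y → ℝ} (hP : IsDist P) (hQ : IsPos Q) : 0 ≤ relEnt P Q := by
  have h2 : ∑ z : X × Y, (P z - Q z) ≤ relEnt P Q :=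
    Finset.sum_le_sum fun z _ => gibbs_pt (hP.1 z) (hQ.1 z)
  rw [Finset.sum_sub_distrib, hP.2, hQ.2] at h2
  linarith

lemma negMulLog_subadd {a b : ℝ} (ha : 0 ≤ a) (hb : 0 ≤ b) :
    Real.negMulLog (a + b) ≤ Real.negMulLog a + Real.negMulLog b := by
  have h1 : a * Real.log a ≤ a * Real.log (a + b) := by
    rcases eq_or_lt_of_le ha with h | h
    · rw [← h]; simp
    · exact mul_le_mul_of_nonneg_left (Real.log_le_log h (by linarith)) ha
  have h2 : b * Real.log b ≤ b * Real.log (a + b) := by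
    rcases eq_or_lt_of_le hb with h | h
    · rw [← h]; simp
    · exact mul_le_mul_of_nonneg_left (Real.log_le_log h (by linarith)) hb
  simp only [Real.negMulLog, neg_mul]
  nlinarith

lemma negMulLog_dec {p d : ℝ} (hp : 0 ≤ p) (hd : 0 < d) (hpd : p + d ≤ 1)
    (hsmall : d * (p + d) ≤ Real.exp (-1)) :
    Real.negMulLog p - Real.negMulLog (p + d) ≤ Real.negMulLog d := by
  have hlog : Real.log (d * (p + d)) ≤ -1 := by
    calc Real.log (d * (p + d)) ≤ Real.log (Real.exp (-1)) :=
          Real.log_le_log (by positivity) hsmall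
      _ = -1 := Real.log_exp _
  have hsum : Real.log d + Real.log (p + d) ≤ -1 := by
    rw [← Real.log_mul (ne_of_gt hd) (by positivity)]; exact hlog
  have key : p * Real.log (p + d) - p * Real.log p ≤ d := by
    rcases eq_or_lt_of_le hp with h | h
    · rw [← h]; simp; linarith
    · have he : Real.log (p + d) - Real.log p = Real.log ((p + d) / p) := by
        rw [Real.log_div (by positivity) (ne_of_gt h)]
      have h2 : Real.log ((p + d) / p) ≤ (p + d) / p - 1 :=
        Real.log_le_sub_one_of_pos (by positivity)
      have h3 : p * ((p + d) / p - 1) = d := by field_simp; ring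
      nlinarith [mul_le_mul_of_nonneg_left h2 h.le]
  have h4 : 1 + Real.log (p + d) + Real.log d ≤ 0 := by linarith
  have h5 := mul_le_mul_of_nonneg_left h4 hd.le
  simp only [Real.negMulLog, neg_mul]
  nlinarith

lemma one_eighth_le_exp_neg_one : (1 : ℝ) / 8 ≤ Real.exp (-1) := by
  have h9 : Real.exp 1 ≤ 8 := by nlinarith [Real.exp_one_lt_d9]
  have h8 : (8 : ℝ)⁻¹ ≤ (Real.exp 1)⁻¹ := inv_anti₀ (Real.exp_pos 1) h9
  rw [Real.exp_neg]
  linarith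

lemma negMulLog_close {p q : ℝ} (hp0 : 0 ≤ p) (hq0 : 0 ≤ q) (hp1 : p ≤ 1) (hq1 : q ≤ 1)
    (hd : |q - p| ≤ 1 / 8) :
    Real.negMulLog q - Real.negMulLog p ≤ Real.negMulLog |q - p| := by
  rcases le_or_gt p q with h | h
  · have heq : q = p + |q - p| := by rw [abs_of_nonneg (by linarith)]; ring
    have := negMulLog_subadd hp0 (abs_nonneg (q - p))
    rw [← heq] at this
    linarith
  · have hd0 : 0 < p - q := by linarith
    have habs : |q - p| = p - q := by rw [abs_of_neg (by linarith)]; ring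
    have hsmall : (p - q) * (q + (p - q)) ≤ Real.exp (-1) := by
      have h8 : (p - q) * (q + (p - q)) ≤ 1 / 8 := by
        have : p - q ≤ 1 / 8 := by rw [habs] at hd; exact hd
        nlinarith
      linarith [one_eighth_le_exp_neg_one]
    have hkey := negMulLog_dec hq0 hd0 (by linarith) hsmall
    have hqd : q + (p - q) = p := by ring
    rw [hqd] at hkey
    rw [habs]
    linarith

lemma negMulLog_mono {a b : ℝ} (ha : 0 ≤ a) (hab : a ≤ b) (hb : b ≤ Real.exp (-1)) :
    Real.negMulLog a ≤ Real.negMulLog b := by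
  rcases eq_or_lt_of_le (ha.trans hab) with h | hb0
  · have ha0 : a = 0 := le_antisymm (hab.trans h.symm.le) ha
    rw [ha0, ← h]
  · have h1 : a - b ≤ a * Real.log a - a * Real.log b := by
      rcases eq_or_lt_of_le ha with h | h
      · rw [← h]; simp; linarith
      · have hg := gibbs_pt ha hb0
        rw [Real.log_div (ne_of_gt h) (ne_of_gt hb0)] at hg
        nlinarith
    have h3 : Real.log b ≤ -1 := by
      calc Real.log b ≤ Real.log (Real.exp (-1)) := Real.log_le_log hb0 hb
        _ = -1 := Real.log_exp _
    simp only [Real.negMulLog, neg_mul]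
    nlinarith [mul_nonneg (sub_nonneg.mpr hab) (by linarith : (0:ℝ) ≤ -(Real.log b + 1))]

lemma negMulLog_jensen [Nonempty X] [Nonempty Y] (δ : X × Y → ℝ) (hδ : ∀ z, 0 ≤ δ z) :
    ∑ z : X × Y, Real.negMulLog (δ z) ≤
      (Fintype.card (X × Y) : ℝ) *
        Real.negMulLog ((∑ z : X × Y, δ z) / (Fintype.card (X × Y) : ℝ)) := by
  set M := (Fintype.card (X × Y) : ℝ) with hM
  have hM0 : (0 : ℝ) < M := by rw [hM]; exact_mod_cast Fintype.card_pos
  have hj := Real.concaveOn_negMulLog.le_map_sum (t := (Finset.univ : Finset (X × Y)))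
      (w := fun _ : X × Y => 1 / M) (p := δ)
      (fun _ _ => by positivity)
      (by rw [Finset.sum_const, Finset.card_univ, nsmul_eq_mul, ← hM, mul_one_div,
        div_self (ne_of_gt hM0)])
      (fun z _ => Set.mem_Ici.mpr (hδ z))
  have hL : ∑ z : X × Y, (1 / M) • Real.negMulLog (δ z)
      = (1 / M) * ∑ z : X × Y, Real.negMulLog (δ z) := by
    simp only [smul_eq_mul]
    rw [← Finset.mul_sum]
  have hR : ∑ z : X × Y, (1 / M) • δ z = (∑ z : X × Y, δ z) / M := by
    simp only [smul_eq_mul]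
    rw [← Finset.mul_sum]; ring
  rw [hL, hR] at hj
  have := mul_le_mul_of_nonneg_left hj hM0.le
  have hMne : M ≠ 0 := ne_of_gt hM0
  calc ∑ z : X × Y, Real.negMulLog (δ z)
      = M * ((1 / M) * ∑ z : X × Y, Real.negMulLog (δ z)) := by field_simp
    _ ≤ M * Real.negMulLog ((∑ z : X × Y, δ z) / M) := this

lemma relEnt_split (P Q : X × Y → ℝ) (hP : ∀ z, 0 ≤ P z) (hQ : ∀ z, 0 < Q z) :
    relEnt P Q = (∑ z : X × Y, - Real.negMulLog (P z)) - ∑ z : X × Y, P z * Real.log (Q z) := by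
  rw [← Finset.sum_sub_distrib]
  refine Finset.sum_congr rfl fun z _ => ?_
  rcases eq_or_lt_of_le (hP z) with h | h
  · rw [← h]; simp
  · rw [Real.log_div (ne_of_gt h) (ne_of_gt (hQ z))]
    simp only [Real.negMulLog, neg_mul, neg_neg]
    ring

lemma relEnt_compare [Nonempty X] [Nonempty Y] (Q : X × Y → ℝ) (hQ : IsPos Q)
    (Pt P' : X × Y → ℝ) (hPt : IsDist Pt) (hP' : IsDist P') (ν : ℝ)
    (hν2 : ν ≤ 1 / 2) (hνpos : 0 < ν)
    (hsum : ∑ z : X × Y, |Pt z - P' z| ≤ ν)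
    (hclose : ∀ z, |Pt z - P' z| ≤ 1 / 8)
    (hM4 : (4 : ℝ) ≤ (Fintype.card (X × Y) : ℝ)) :
    relEnt Pt Q ≤ relEnt P' Q
      + ν * Real.log ((Fintype.card (X × Y) : ℝ) / ν)
      + ν * (Finset.univ.sup' Finset.univ_nonempty (fun z : X × Y => Real.log (1 / Q z))) := by
  set M := (Fintype.card (X × Y) : ℝ) with hM
  have hM0 : (0 : ℝ) < M := by linarith
  set mx := Finset.univ.sup' Finset.univ_nonempty (fun z : X × Y => Real.log (1 / Q z)) with hmx
  have hQ1 : ∀ z, Q z ≤ 1 := by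
    intro z
    have h1 : Q z ≤ ∑ w : X × Y, Q w :=
      Finset.single_le_sum (fun w _ => (hQ.1 w).le) (Finset.mem_univ z)
    rw [hQ.2] at h1; exact h1
  have hmx_ge : ∀ z, Real.log (1 / Q z) ≤ mx := fun z =>
    Finset.le_sup' (fun z : X × Y => Real.log (1 / Q z)) (Finset.mem_univ z)
  have hmx0 : 0 ≤ mx := by
    obtain ⟨z⟩ : Nonempty (X × Y) := inferInstance
    refine le_trans ?_ (hmx_ge z)
    rw [one_div]
    exact Real.log_nonneg (one_le_inv_iff₀.mpr ⟨hQ.1 z, hQ1 z⟩)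
  have hP'le1 : ∀ z, P' z ≤ 1 := by
    intro z
    have h1 : P' z ≤ ∑ w : X × Y, P' w :=
      Finset.single_le_sum (fun w _ => hP'.1 w) (Finset.mem_univ z)
    rw [hP'.2] at h1; exact h1
  have hPtle1 : ∀ z, Pt z ≤ 1 := by
    intro z
    have h1 : Pt z ≤ ∑ w : X × Y, Pt w :=
      Finset.single_le_sum (fun w _ => hPt.1 w) (Finset.mem_univ z)
    rw [hPt.2] at h1; exact h1
  rw [relEnt_split Pt Q hPt.1 hQ.1, relEnt_split P' Q hP'.1 hQ.1]
  -- entropy part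
  have hent : (∑ z : X × Y, - Real.negMulLog (Pt z)) - (∑ z : X × Y, - Real.negMulLog (P' z))
      ≤ ν * Real.log (M / ν) := by
    have h1 : (∑ z : X × Y, - Real.negMulLog (Pt z)) - (∑ z : X × Y, - Real.negMulLog (P' z))
        = ∑ z : X × Y, (Real.negMulLog (P' z) - Real.negMulLog (Pt z)) := by
      rw [← Finset.sum_sub_distrib]
      exact Finset.sum_congr rfl fun z _ => by ring
    have h2 : ∀ z : X × Y, Real.negMulLog (P' z) - Real.negMulLog (Pt z)
        ≤ Real.negMulLog |Pt z - P' z| := by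
      intro z
      have h := negMulLog_close (hPt.1 z) (hP'.1 z) (hPtle1 z) (hP'le1 z)
        (by rw [abs_sub_comm]; exact hclose z)
      rw [abs_sub_comm (P' z) (Pt z)] at h
      exact h
    have h3 : ∑ z : X × Y, Real.negMulLog |Pt z - P' z|
        ≤ M * Real.negMulLog ((∑ z : X × Y, |Pt z - P' z|) / M) :=
      negMulLog_jensen _ fun z => abs_nonneg _
    have h4 : M * Real.negMulLog ((∑ z : X × Y, |Pt z - P' z|) / M)
        ≤ M * Real.negMulLog (ν / M) := by
      refine mul_le_mul_of_nonneg_left ?_ hM0.le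
      refine negMulLog_mono
        (div_nonneg (Finset.sum_nonneg fun z _ => abs_nonneg _) hM0.le) ?_ ?_
      · exact (div_le_div_iff_of_pos_right hM0).mpr hsum
      · have ha : ν / M ≤ ν / 4 := div_le_div_of_nonneg_left hνpos.le (by norm_num) hM4
        have hb : ν / 4 ≤ 1 / 8 := by linarith
        linarith [one_eighth_le_exp_neg_one]
    have h5 : M * Real.negMulLog (ν / M) = ν * Real.log (M / ν) := by
      simp only [Real.negMulLog, neg_mul]
      rw [Real.log_div (ne_of_gt hνpos) (ne_of_gt hM0),
        Real.log_div (ne_of_gt hM0) (ne_of_gt hνpos)]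
      field_simp
      ring
    rw [h1]
    calc ∑ z : X × Y, (Real.negMulLog (P' z) - Real.negMulLog (Pt z))
        ≤ ∑ z : X × Y, Real.negMulLog |Pt z - P' z| := Finset.sum_le_sum fun z _ => h2 z
      _ ≤ M * Real.negMulLog ((∑ z : X × Y, |Pt z - P' z|) / M) := h3
      _ ≤ M * Real.negMulLog (ν / M) := h4
      _ = ν * Real.log (M / ν) := h5
  -- cross-entropy part
  have hcross : (∑ z : X × Y, P' z * Real.log (Q z)) - (∑ z : X × Y, Pt z * Real.log (Q z))
      ≤ ν * mx := by
    have h1 : (∑ z : X × Y, P' z * Real.log (Q z)) - (∑ z : X × Y, Pt z * Real.log (Q z))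
        = ∑ z : X × Y, (P' z - Pt z) * Real.log (Q z) := by
      rw [← Finset.sum_sub_distrib]
      exact Finset.sum_congr rfl fun z _ => by ring
    have h2 : ∀ z : X × Y, (P' z - Pt z) * Real.log (Q z) ≤ |Pt z - P' z| * mx := by
      intro z
      have hlq : Real.log (Q z) ≤ 0 := Real.log_nonpos (hQ.1 z).le (hQ1 z)
      have ha : -(|Pt z - P' z|) ≤ P' z - Pt z := by
        have := le_abs_self (Pt z - P' z)
        linarith
      have hstep : (P' z - Pt z) * Real.log (Q z) ≤ (-(|Pt z - P' z|)) * Real.log (Q z) :=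
        mul_le_mul_of_nonpos_right ha hlq
      have heq : (-(|Pt z - P' z|)) * Real.log (Q z) = |Pt z - P' z| * (- Real.log (Q z)) := by
        ring
      have hml : - Real.log (Q z) ≤ mx := by
        have := hmx_ge z
        rw [one_div, Real.log_inv] at this
        exact this
      calc (P' z - Pt z) * Real.log (Q z) ≤ |Pt z - P' z| * (- Real.log (Q z)) := by
            rw [← heq]; exact hstep
        _ ≤ |Pt z - P' z| * mx := mul_le_mul_of_nonneg_left hml (abs_nonneg _)
    rw [h1]
    calc ∑ z : X × Y, (P' z - Pt z) * Real.log (Q z)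
        ≤ ∑ z : X × Y, |Pt z - P' z| * mx := Finset.sum_le_sum fun z _ => h2 z
      _ = (∑ z : X × Y, |Pt z - P' z|) * mx := by rw [Finset.sum_mul]
      _ ≤ ν * mx := mul_le_mul_of_nonneg_right hsum hmx0
  linarith

/-- approximation of the projected relative entropy by its
restriction to joint types. -/
theorem En_approximates_projE
    [Nonempty X] [Nonempty Y]
    (Q : X × Y → ℝ) (hQ : IsPos Q)
    (hX : 2 ≤ Fintype.card X) (hY : 2 ≤ Fintype.card Y)
    (n : ℕ) (hn : 1 ≤ n)
    (νn Δn : ℝ)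
    (hν : νn = 4 * ((Fintype.card X : ℝ) - 1) * ((Fintype.card Y : ℝ) - 1) / (n : ℝ))
    (hΔ : Δn = νn * Real.log ((Fintype.card X : ℝ) * (Fintype.card Y : ℝ) / νn)
        + νn * (Finset.univ.sup' Finset.univ_nonempty
            (fun z : X × Y => Real.log (1 / Q z))))
    (hν_half : νn ≤ 1 / 2) :
    ∀ Pbar : X × Y → ℝ, IsTypeN n Pbar → En n Pbar Q ≤ projE Pbar Q + Δn := by
  intro Pbar hPbar
  have hcX : (2 : ℝ) ≤ (Fintype.card X : ℝ) := by exact_mod_cast hX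
  have hcY : (2 : ℝ) ≤ (Fintype.card Y : ℝ) := by exact_mod_cast hY
  have hnpos : (0 : ℝ) < n := by exact_mod_cast hn
  have hν_pos : 0 < νn := by
    rw [hν]
    apply div_pos ?_ hnpos
    nlinarith
  have hn8 : (8 : ℝ) ≤ n := by
    have h1 : 4 / (n : ℝ) ≤ νn := by
      rw [hν]
      exact (div_le_div_iff_of_pos_right hnpos).mpr (by nlinarith)
    have h2 : 4 / (n : ℝ) ≤ 1 / 2 := le_trans h1 hν_half
    rw [div_le_div_iff₀ hnpos (by norm_num)] at h2
    linarith
  have hcardeq : ((Fintype.card (X × Y) : ℝ)) = (Fintype.card X : ℝ) * (Fintype.card Y : ℝ) := by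
    rw [Fintype.card_prod]; push_cast; ring
  have hM4 : (4 : ℝ) ≤ (Fintype.card (X × Y) : ℝ) := by rw [hcardeq]; nlinarith
  have hMle : (Fintype.card (X × Y) : ℝ) / n ≤ νn := by
    rw [hν, hcardeq]
    exact (div_le_div_iff_of_pos_right hnpos).mpr (by nlinarith)
  have hSE_bdd : BddBelow { d : ℝ | ∃ Pt : X × Y → ℝ,
      IsTypeN n Pt ∧ margX Pt = margX Pbar ∧ margY Pt = margY Pbar ∧ d = relEnt Pt Q } := by
    refine ⟨0, fun d hd => ?_⟩
    obtain ⟨Pt, hPt, _, _, rfl⟩ := hd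
    exact relEnt_nonneg' hPt.1 hQ
  have hSP_ne : { d : ℝ | ∃ P' : X × Y → ℝ,
      IsDist P' ∧ margX P' = margX Pbar ∧ margY P' = margY Pbar ∧ d = relEnt P' Q }.Nonempty :=
    ⟨relEnt Pbar Q, Pbar, hPbar.1, rfl, rfl, rfl⟩
  have hkey : ∀ d ∈ { d : ℝ | ∃ P' : X × Y → ℝ,
      IsDist P' ∧ margX P' = margX Pbar ∧ margY P' = margY Pbar ∧ d = relEnt P' Q },
      En n Pbar Q - Δn ≤ d := by
    rintro d ⟨P', hP', hmx, hmy, rfl⟩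
    obtain ⟨Pt, hPt, hmx', hmy', hclose⟩ :=
      exists_rounding n (by omega) P' Pbar hP'.1 hmx hmy hPbar
    have hEnle : En n Pbar Q ≤ relEnt Pt Q := by
      unfold En
      exact csInf_le hSE_bdd ⟨Pt, hPt, hmx', hmy', rfl⟩
    have hsumδ : ∑ z : X × Y, |Pt z - P' z| ≤ νn := by
      calc ∑ z : X × Y, |Pt z - P' z| ≤ ∑ _z : X × Y, 1 / (n : ℝ) :=
            Finset.sum_le_sum fun z _ => hclose z
        _ = (Fintype.card (X × Y) : ℝ) / n := by
            rw [Finset.sum_const, Finset.card_univ, nsmul_eq_mul, mul_one_div]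
        _ ≤ νn := hMle
    have hclose8 : ∀ z, |Pt z - P' z| ≤ 1 / 8 := by
      intro z
      refine le_trans (hclose z) ?_
      rw [div_le_div_iff₀ hnpos (by norm_num)]
      linarith
    have hcomp := relEnt_compare Q hQ Pt P' hPt.1 hP' νn hν_half hν_pos hsumδ hclose8 hM4
    rw [hcardeq] at hcomp
    rw [hΔ] at *
    linarith
  have hfin : En n Pbar Q - Δn ≤ projE Pbar Q := by
    unfold projE
    exact le_csInf hSP_ne hkey
  linarith
end
end

section
/- Let 𝒵 be a nonempty finite set, Q a distribution on 𝒵 with Q(z) > 0 for all z, f₁,…,f_k : 𝒵 → ℝ and c₁,…,c_k ∈ ℝ, and let ℳ = { P̃ a distribution on 𝒵 : Σ_z P̃(z)·f_i(z) = c_i for all 1 ≤ i ≤ k } be the corresponding mixture family; assume ℳ contains at least one distribution with full support. Then any minimizer P* of min{ D(P̃‖Q) : P̃ ∈ ℳ } satisfies the Pythagorean identity D(P̃‖Q) = D(P̃‖P*) + D(P*‖Q) for every P̃ ∈ ℳ, and P* belongs to the exponential family generated by Q and f₁,…,f_k: there exist θ₁,…,θ_k ∈ ℝ and ψ ∈ ℝ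 such that P*(z) = Q(z)·exp(Σ_{i=1}^k θ_i·f_i(z) − ψ) for all z ∈ 𝒵. -/
open scoped Classical BigOperators

noncomputable section

variable {Z : Type*} [Fintype Z]

/-- `P` is a probability distribution on the finite set `Z`. -/
def IsDistZ (P : Z → ℝ) : Prop :=
  (∀ z, 0 ≤ P z) ∧ ∑ z : Z, P z = 1

/-- Relative entropy `D(P‖Q)` on `Z` (natural log; `Real.log 0 = 0` gives `0·log 0 = 0`). -/
def relEntZ (P Q : Z → ℝ) : ℝ := ∑ z : Z, P z * Real.log (P z / Q z)

/-! ### Auxiliary lemmas -/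

lemma aux_lb {q x : ℝ} (hq : 0 < q) (hx : 0 ≤ x) : x - q ≤ x * Real.log (x / q) := by
  rcases eq_or_lt_of_le hx with h | h
  · simp [← h]; positivity
  · have h1 : 0 < x / q := div_pos h hq
    have h2 : 1 - (x / q)⁻¹ ≤ Real.log (x / q) := Real.one_sub_inv_le_log_of_pos h1
    have h3 : (x / q)⁻¹ = q / x := by field_simp
    rw [h3] at h2
    have h4 := mul_le_mul_of_nonneg_left h2 hx
    have h5 : x * (1 - q / x) = x - q := by field_simp
    linarith

lemma aux_mul_log_div {q : ℝ} (hq : 0 < q) (x : ℝ) :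
    x * Real.log (x / q) = x * Real.log x - x * Real.log q := by
  rcases eq_or_ne x 0 with rfl | h
  · simp
  · rw [Real.log_div h hq.ne']; ring

lemma aux_convex {q a b t : ℝ} (hq : 0 < q) (ha : 0 ≤ a) (hb : 0 ≤ b)
    (ht0 : 0 ≤ t) (ht1 : t ≤ 1) :
    ((1 - t) * a + t * b) * Real.log (((1 - t) * a + t * b) / q)
      ≤ (1 - t) * (a * Real.log (a / q)) + t * (b * Real.log (b / q)) := by
  have hc := Real.convexOn_mul_log.2 (Set.mem_Ici.2 ha) (Set.mem_Ici.2 hb)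
    (by linarith : (0:ℝ) ≤ 1 - t) ht0 (by ring)
  simp only [smul_eq_mul] at hc
  rw [aux_mul_log_div hq, aux_mul_log_div hq, aux_mul_log_div hq]
  nlinarith [hc]

lemma aux_hasDerivAt {a b q : ℝ} (ha : 0 < a) (hq : 0 < q) :
    HasDerivAt (fun t : ℝ => (a + t * b) * Real.log ((a + t * b) / q))
      (b * (Real.log (a / q) + 1)) 0 := by
  have hu : HasDerivAt (fun t : ℝ => a + t * b) b 0 := by
    simpa using ((hasDerivAt_id (0:ℝ)).mul_const b).const_add a
  have hu0 : (a + (0:ℝ) * b) = a := by ring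
  have hlog : HasDerivAt (fun t : ℝ => Real.log (a + t * b)) (b / a) 0 := by
    have := hu.log (by simpa [hu0] using ha.ne')
    simpa [hu0] using this
  have hG : HasDerivAt (fun t : ℝ => (a + t * b) * (Real.log (a + t * b) - Real.log q))
      (b * (Real.log (a / q) + 1)) 0 := by
    have h1 := hu.mul (hlog.sub_const (Real.log q))
    refine HasDerivAt.congr_deriv h1 ?_
    rw [hu0, Real.log_div ha.ne' hq.ne']
    field_simp
  refine hG.congr_of_eventuallyEq ?_
  have hcont : ContinuousAt (fun t : ℝ => a + t * b) 0 := by fun_prop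
  have hev : ∀ᶠ t in nhds (0:ℝ), 0 < a + t * b :=
    hcont.eventually (eventually_gt_nhds (show (0:ℝ) < a + 0 * b by simpa [hu0] using ha))
  filter_upwards [hev] with t ht
  rw [Real.log_div ht.ne' hq.ne']

/-- The linear functional `v ↦ ∑ z, v z * w z` on `Z → ℝ`. -/
def dotF (w : Z → ℝ) : (Z → ℝ) →ₗ[ℝ] ℝ where
  toFun v := ∑ z : Z, v z * w z
  map_add' x y := by simp [add_mul, Finset.sum_add_distrib]
  map_smul' r x := by simp [Finset.mul_sum, mul_assoc]

lemma dotF_single (w : Z → ℝ) (z : Z) : dotF w (Pi.single z 1) = w z := by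
  show (∑ z' : Z, (Pi.single z 1 : Z → ℝ) z' * w z') = w z
  rw [Finset.sum_eq_single z]
  · simp
  · intro z' _ hne
    simp [Pi.single_apply, hne]
  · intro h; exact absurd (Finset.mem_univ z) h

/-- Pythagorean identity for I-projection onto a mixture family, and
membership of the projection in the associated exponential family. -/
theorem mixture_family_projection
    [Nonempty Z]
    (Q : Z → ℝ) (hQpos : ∀ z, 0 < Q z) (hQsum : ∑ z : Z, Q z = 1)
    (k : ℕ) (f : Fin k → Z → ℝ) (c : Fin k → ℝ)
    (hfull : ∃ Pt : Z → ℝ,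
      (IsDistZ Pt ∧ ∀ i : Fin k, ∑ z : Z, Pt z * f i z = c i) ∧ ∀ z, 0 < Pt z)
    (Ps : Z → ℝ)
    (hPsDist : IsDistZ Ps) (hPsM : ∀ i : Fin k, ∑ z : Z, Ps z * f i z = c i)
    (hmin : relEntZ Ps Q
      = sInf { d : ℝ | ∃ Pt : Z → ℝ,
          (IsDistZ Pt ∧ ∀ i : Fin k, ∑ z : Z, Pt z * f i z = c i) ∧ d = relEntZ Pt Q }) :
    (∀ Pt : Z → ℝ, IsDistZ Pt → (∀ i : Fin k, ∑ z : Z, Pt z * f i z = c i) →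
        relEntZ Pt Q = relEntZ Pt Ps + relEntZ Ps Q) ∧
    ∃ θ : Fin k → ℝ, ∃ ψ : ℝ,
      ∀ z : Z, Ps z = Q z * Real.exp ((∑ i : Fin k, θ i * f i z) - ψ) := by
  classical
  obtain ⟨P0, ⟨⟨hP0nn, hP0sum⟩, hP0c⟩, hP0pos⟩ := hfull
  obtain ⟨hPsnn, hPssum⟩ := hPsDist
  -- relative entropy is nonnegative on distributions
  have hEntLB : ∀ P : Z → ℝ, IsDistZ P → 0 ≤ relEntZ P Q := by
    rintro P ⟨hnn, hsum⟩
    calc (0:ℝ) = ∑ z : Z, (P z - Q z) := by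
          rw [Finset.sum_sub_distrib, hsum, hQsum]; ring
    _ ≤ relEntZ P Q := Finset.sum_le_sum fun z _ => aux_lb (hQpos z) (hnn z)
  have hBdd : BddBelow { d : ℝ | ∃ Pt : Z → ℝ,
      (IsDistZ Pt ∧ ∀ i : Fin k, ∑ z : Z, Pt z * f i z = c i) ∧ d = relEntZ Pt Q } := by
    refine ⟨0, ?_⟩
    rintro d ⟨Pt, ⟨hPt, _⟩, rfl⟩
    exact hEntLB Pt hPt
  have hle : ∀ Pt : Z → ℝ, IsDistZ Pt → (∀ i : Fin k, ∑ z : Z, Pt z * f i z = c i) →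
      relEntZ Ps Q ≤ relEntZ Pt Q := by
    intro Pt h1 h2
    rw [hmin]
    exact csInf_le hBdd ⟨Pt, ⟨h1, h2⟩, rfl⟩
  -- `Ps` has full support
  have hPspos : ∀ z, 0 < Ps z := by
    by_contra hcon
    push_neg at hcon
    obtain ⟨z0, hz0⟩ := hcon
    have hz0' : Ps z0 = 0 := le_antisymm hz0 (hPsnn z0)
    set S : Finset Z := Finset.univ.filter (fun z => Ps z = 0) with hS
    have hz0S : z0 ∈ S := by simp [hS, hz0']
    set A : ℝ := ∑ z ∈ S, P0 z with hA
    have hApos : 0 < A :=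
      Finset.sum_pos' (fun z _ => (hP0pos z).le) ⟨z0, hz0S, hP0pos z0⟩
    set K : ℝ := relEntZ P0 Q - relEntZ Ps Q with hK
    set t : ℝ := Real.exp (-((|K| + 1) / A)) with ht
    have ht0 : 0 < t := Real.exp_pos _
    have ht1 : t < 1 := by
      rw [ht]
      apply Real.exp_lt_one_iff.2
      have : 0 < (|K| + 1) / A := by positivity
      linarith
    set Pm : Z → ℝ := fun z => (1 - t) * Ps z + t * P0 z with hPm
    have hPmnn : ∀ z, 0 ≤ Pm z := by
      intro z
      have := hPsnn z
      have := (hP0pos z).le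
      have : (0:ℝ) ≤ 1 - t := by linarith
      simp only [hPm]
      nlinarith [hPsnn z, (hP0pos z).le]
    have hPmD : IsDistZ Pm := by
      refine ⟨hPmnn, ?_⟩
      simp only [hPm]
      rw [Finset.sum_add_distrib, ← Finset.mul_sum, ← Finset.mul_sum, hPssum, hP0sum]
      ring
    have hPmc : ∀ i : Fin k, ∑ z : Z, Pm z * f i z = c i := by
      intro i
      simp only [hPm]
      have : ∀ z, ((1 - t) * Ps z + t * P0 z) * f i z
          = (1 - t) * (Ps z * f i z) + t * (P0 z * f i z) := fun z => by ring
      simp_rw [this]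
      rw [Finset.sum_add_distrib, ← Finset.mul_sum, ← Finset.mul_sum, hPsM i, hP0c i]
      ring
    -- key upper bound
    have hterm : ∀ z : Z, Pm z * Real.log (Pm z / Q z)
        ≤ (1 - t) * (Ps z * Real.log (Ps z / Q z)) + t * (P0 z * Real.log (P0 z / Q z))
          + (if Ps z = 0 then t * Real.log t * P0 z else 0) := by
      intro z
      by_cases hz : Ps z = 0
      · have hPmz : Pm z = t * P0 z := by simp [hPm, hz]
        rw [hPmz, hz, if_pos rfl]
        have hlog : Real.log (t * P0 z / Q z) = Real.log t + Real.log (P0 z / Q z) := by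
          rw [mul_div_assoc, Real.log_mul ht0.ne' (div_pos (hP0pos z) (hQpos z)).ne']
        rw [hlog]
        simp
        ring_nf
        nlinarith [le_refl (0:ℝ)]
      · rw [if_neg hz, add_zero]
        exact aux_convex (hQpos z) (hPsnn z) (hP0pos z).le ht0.le ht1.le
    have hsum_if : ∑ z : Z, (if Ps z = 0 then t * Real.log t * P0 z else 0)
        = t * Real.log t * A := by
      rw [hA, Finset.mul_sum, hS]
      rw [Finset.sum_filter]
    have hbound : relEntZ Pm Q ≤ relEntZ Ps Q + t * (K + A * Real.log t) := by
      have h1 : relEntZ Pm Q ≤ (1 - t) * relEntZ Ps Q + t * relEntZ P0 Q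
          + t * Real.log t * A := by
        calc relEntZ Pm Q ≤ ∑ z : Z,
            ((1 - t) * (Ps z * Real.log (Ps z / Q z)) + t * (P0 z * Real.log (P0 z / Q z))
              + (if Ps z = 0 then t * Real.log t * P0 z else 0)) :=
              Finset.sum_le_sum fun z _ => hterm z
        _ = (1 - t) * relEntZ Ps Q + t * relEntZ P0 Q + t * Real.log t * A := by
              rw [Finset.sum_add_distrib, Finset.sum_add_distrib, hsum_if,
                ← Finset.mul_sum, ← Finset.mul_sum]
              rfl
      have : (1 - t) * relEntZ Ps Q + t * relEntZ P0 Q + t * Real.log t * A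
          = relEntZ Ps Q + t * (K + A * Real.log t) := by
        rw [hK]; ring
      linarith
    have hneg : K + A * Real.log t < 0 := by
      have hlt : Real.log t = -((|K| + 1) / A) := by rw [ht, Real.log_exp]
      rw [hlt]
      have : A * -((|K| + 1) / A) = -(|K| + 1) := by field_simp
      rw [this]
      have := le_abs_self K
      linarith
    have : relEntZ Pm Q < relEntZ Ps Q := by nlinarith
    exact absurd (hle Pm hPmD hPmc) (not_le.2 this)
  -- directional derivative is zero along the family
  have hdir : ∀ v : Z → ℝ, (∑ z : Z, v z = 0) → (∀ i : Fin k, ∑ z : Z, v z * f i z = 0) →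
      ∑ z : Z, v z * Real.log (Ps z / Q z) = 0 := by
    intro v hv0 hvf
    set g : ℝ → ℝ := fun t => ∑ z : Z, (Ps z + t * v z) * Real.log ((Ps z + t * v z) / Q z)
      with hg
    have hderiv : HasDerivAt g (∑ z : Z, v z * (Real.log (Ps z / Q z) + 1)) 0 :=
      HasDerivAt.fun_sum fun z _ => aux_hasDerivAt (hPspos z) (hQpos z)
    set ε : ℝ := Finset.univ.inf' Finset.univ_nonempty (fun z => Ps z / (|v z| + 1)) with hε
    have hεpos : 0 < ε := by
      rw [hε, Finset.lt_inf'_iff]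
      intro z _
      have := hPspos z
      positivity
    have hmono : ∀ t : ℝ, |t| < ε → g 0 ≤ g t := by
      intro t htb
      have hnn : ∀ z, 0 ≤ Ps z + t * v z := by
        intro z
        have h1 : ε ≤ Ps z / (|v z| + 1) := Finset.inf'_le _ (Finset.mem_univ z)
        have hvz : (0:ℝ) < |v z| + 1 := by positivity
        have h2 : ε * (|v z| + 1) ≤ Ps z := by
          rw [← le_div_iff₀ hvz]; exact h1
        have h3 : |t * v z| ≤ |t| * (|v z| + 1) := by
          rw [abs_mul]
          nlinarith [abs_nonneg t, abs_nonneg (v z)]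
        have h4 : |t| * (|v z| + 1) < ε * (|v z| + 1) :=
          (mul_lt_mul_iff_left₀ hvz).2 htb
        have h5 := neg_abs_le (t * v z)
        linarith
      have hDist : IsDistZ (fun z => Ps z + t * v z) := by
        refine ⟨hnn, ?_⟩
        rw [Finset.sum_add_distrib, hPssum, ← Finset.mul_sum, hv0]
        ring
      have hCon : ∀ i : Fin k, ∑ z : Z, (Ps z + t * v z) * f i z = c i := by
        intro i
        have : ∀ z, (Ps z + t * v z) * f i z = Ps z * f i z + t * (v z * f i z) :=
          fun z => by ring
        simp_rw [this]
        rw [Finset.sum_add_distrib, ← Finset.mul_sum, hPsM i, hvf i]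
        ring
      have hg0 : g 0 = relEntZ Ps Q := by
        simp only [hg, zero_mul, add_zero]
        rfl
      have hgt : g t = relEntZ (fun z => Ps z + t * v z) Q := rfl
      rw [hg0, hgt]
      exact hle _ hDist hCon
    have hlocal : IsLocalMin g 0 :=
      Metric.eventually_nhds_iff.2
        ⟨ε, hεpos, fun {t} htd => hmono t (by simpa [Real.dist_eq] using htd)⟩
    have hzero := hlocal.hasDerivAt_eq_zero hderiv
    have hsplit : ∑ z : Z, v z * (Real.log (Ps z / Q z) + 1)
        = (∑ z : Z, v z * Real.log (Ps z / Q z)) + ∑ z : Z, v z := by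
      rw [← Finset.sum_add_distrib]
      exact Finset.sum_congr rfl fun z _ => by ring
    rw [hsplit, hv0, add_zero] at hzero
    exact hzero
  -- the functional `Pt ↦ ∑ Pt z log (Ps z / Q z)` is constant on the family
  have hconst : ∀ Pt : Z → ℝ, IsDistZ Pt → (∀ i : Fin k, ∑ z : Z, Pt z * f i z = c i) →
      ∑ z : Z, Pt z * Real.log (Ps z / Q z) = relEntZ Ps Q := by
    rintro Pt ⟨hnn, hsum⟩ hcons
    have h0 : ∑ z : Z, (Pt z - Ps z) = 0 := by
      rw [Finset.sum_sub_distrib, hsum, hPssum]; ring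
    have hf0 : ∀ i : Fin k, ∑ z : Z, (Pt z - Ps z) * f i z = 0 := by
      intro i
      have : ∀ z, (Pt z - Ps z) * f i z = Pt z * f i z - Ps z * f i z := fun z => by ring
      simp_rw [this]
      rw [Finset.sum_sub_distrib, hcons i, hPsM i]
      ring
    have := hdir (fun z => Pt z - Ps z) h0 hf0
    have hexp : ∑ z : Z, (Pt z - Ps z) * Real.log (Ps z / Q z)
        = (∑ z : Z, Pt z * Real.log (Ps z / Q z))
          - ∑ z : Z, Ps z * Real.log (Ps z / Q z) := by
      rw [← Finset.sum_sub_distrib]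
      exact Finset.sum_congr rfl fun z _ => by ring
    rw [hexp] at this
    have hPsQ : relEntZ Ps Q = ∑ z : Z, Ps z * Real.log (Ps z / Q z) := rfl
    linarith
  constructor
  · -- Pythagorean identity
    intro Pt hPtD hPtc
    have h1 := hconst Pt hPtD hPtc
    have h2 : relEntZ Pt Q = relEntZ Pt Ps + ∑ z : Z, Pt z * Real.log (Ps z / Q z) := by
      show (∑ z : Z, Pt z * Real.log (Pt z / Q z))
        = (∑ z : Z, Pt z * Real.log (Pt z / Ps z)) + ∑ z : Z, Pt z * Real.log (Ps z / Q z)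
      rw [← Finset.sum_add_distrib]
      refine Finset.sum_congr rfl fun z _ => ?_
      rcases eq_or_lt_of_le (hPtD.1 z) with h | h
      · simp [← h]
      · rw [Real.log_div h.ne' (hQpos z).ne', Real.log_div h.ne' (hPspos z).ne',
          Real.log_div (hPspos z).ne' (hQpos z).ne']
        ring
    rw [h2, h1]
  · -- exponential family membership
    set F : Fin (k + 1) → Z → ℝ := Fin.cons (fun _ => (1:ℝ)) f with hF
    set g : Z → ℝ := fun z => Real.log (Ps z / Q z) with hgdef
    have hker : (⨅ j : Fin (k + 1), LinearMap.ker (dotF (F j))) ≤ LinearMap.ker (dotF g) := by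
      intro v hv
      rw [Submodule.mem_iInf] at hv
      have h0 : ∑ z : Z, v z = 0 := by
        have := hv 0
        rw [LinearMap.mem_ker] at this
        simpa [dotF, hF] using this
      have hi : ∀ i : Fin k, ∑ z : Z, v z * f i z = 0 := by
        intro i
        have := hv i.succ
        rw [LinearMap.mem_ker] at this
        simpa [dotF, hF] using this
      rw [LinearMap.mem_ker]
      exact hdir v h0 hi
    have hspan := mem_span_of_iInf_ker_le_ker (𝕜 := ℝ) hker
    obtain ⟨cc, hcc⟩ := (Submodule.mem_span_range_iff_exists_fun ℝ).1 hspan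
    have heval : ∀ z : Z, g z = ∑ j : Fin (k + 1), cc j * F j z := by
      intro z
      have h := LinearMap.congr_fun hcc (Pi.single z 1)
      rw [LinearMap.sum_apply] at h
      have hterm : ∀ j : Fin (k + 1),
          (cc j • dotF (F j)) (Pi.single z 1) = cc j * F j z := by
        intro j
        rw [LinearMap.smul_apply, dotF_single, smul_eq_mul]
      rw [Finset.sum_congr rfl fun j _ => hterm j] at h
      rw [dotF_single] at h
      exact h.symm
    refine ⟨fun i => cc i.succ, -(cc 0), fun z => ?_⟩
    have hz := heval z
    rw [Fin.sum_univ_succ] at hz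
    simp only [hF, Fin.cons_zero, Fin.cons_succ, mul_one] at hz
    have harg : (∑ i : Fin k, cc i.succ * f i z) - -(cc 0) = g z := by
      rw [hz]; ring
    rw [harg, hgdef]
    rw [Real.exp_log (div_pos (hPspos z) (hQpos z)), mul_comm]
    exact (div_mul_cancel₀ (Ps z) (hQpos z).ne').symm
end
end
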